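/- arXiv:2503.09565 — 2 statements merged into one kernel-verified Lean document; each statement's English description precedes it below -/
import Mathlib

section
/- Let SiLU(x) = x·σ(x), where σ(x) = 1/(1 + exp(−x)) is the sigmoid function. Then for all real numbers r_1, r_2, the function x ↦ (r_1 + SiLU(x))·(r_2 + SiLU'(x)), where SiLU'(x) = σ(x) + x·σ(x)(1 − σ(x)) is the derivative of SiLU, is not constant Lebesgue-almost everywhere on ℝ; that is, there is no C ∈ ℝ with (r_1 + x σ(x))·(r_2 + σ(x) + x σ(x)(1 − σ(x))) = C for Lebesgue-almost every x. -/
open MeasureTheory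

/-- The sigmoid function. -/
noncomputable def sigmoid (x : ℝ) : ℝ := 1 / (1 + Real.exp (-x))

lemma sigmoid_eq (x : ℝ) : sigmoid x = Real.exp x / (Real.exp x + 1) := by
  unfold sigmoid
  rw [Real.exp_neg]
  have h : Real.exp x > 0 := Real.exp_pos x
  field_simp

lemma sigmoid_continuous : Continuous sigmoid := by
  apply Continuous.div continuous_const
  · fun_prop
  · intro x
    positivity

/-- For all reals `r₁ r₂`, the function
`x ↦ (r₁ + x * σ x) * (r₂ + σ x + x * σ x * (1 - σ x))` (i.e. `(r₁ + SiLU x)(r₂ + SiLU' x)`)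
is not constant Lebesgue-almost everywhere. -/
theorem stmt_9 (r₁ r₂ : ℝ) :
    ¬ ∃ C : ℝ, ∀ᵐ x : ℝ ∂(volume : Measure ℝ),
      (r₁ + x * sigmoid x) * (r₂ + sigmoid x + x * sigmoid x * (1 - sigmoid x)) = C := by
  rintro ⟨C, hC⟩
  -- upgrade to everywhere equality via continuity
  have hcont : Continuous fun x : ℝ =>
      (r₁ + x * sigmoid x) * (r₂ + sigmoid x + x * sigmoid x * (1 - sigmoid x)) := by
    have := sigmoid_continuous
    fun_prop
  have hall : ∀ x : ℝ,
      (r₁ + x * sigmoid x) * (r₂ + sigmoid x + x * sigmoid x * (1 - sigmoid x)) = C := by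
    have := (hcont.ae_eq_iff_eq (volume : Measure ℝ) continuous_const).1 hC
    intro x
    exact congrFun this x
  -- evaluate sigmoid at the points 0, ±1, ±2
  set e := Real.exp 1 with he_def
  have he : 1 < e := by have := Real.exp_one_gt_d9; rw [he_def]; linarith
  have hep : (0:ℝ) < e := lt_trans one_pos he
  have hs0 : sigmoid 0 = 1/2 := by unfold sigmoid; norm_num
  have hs1 : sigmoid 1 = e / (e + 1) := by rw [sigmoid_eq]
  have hsm1 : sigmoid (-1) = 1 / (e + 1) := by
    rw [sigmoid_eq, Real.exp_neg]
    field_simp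
    ring
  have he2 : Real.exp 2 = e ^ 2 := by
    rw [he_def, ← Real.exp_nat_mul]; norm_num
  have hs2 : sigmoid 2 = e ^ 2 / (e ^ 2 + 1) := by rw [sigmoid_eq, he2]
  have hsm2 : sigmoid (-2) = 1 / (e ^ 2 + 1) := by
    rw [sigmoid_eq, Real.exp_neg, he2]
    have : (0:ℝ) < e ^ 2 := by positivity
    field_simp
    ring
  set s := sigmoid 1 with hs
  set t := sigmoid 2 with ht
  have h0 := hall 0
  have h1 := hall 1
  have hm1 := hall (-1)
  have h2 := hall 2
  have hm2 := hall (-2)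
  rw [hs0] at h0
  rw [← hs] at h1
  rw [hsm1] at hm1
  rw [← ht] at h2
  rw [hsm2] at hm2
  -- express sigmoid(-1), sigmoid(-2) via s and t
  have hms : (1 : ℝ) / (e + 1) = 1 - s := by
    rw [hs1]; field_simp; ring
  have hmt : (1 : ℝ) / (e ^ 2 + 1) = 1 - t := by
    rw [hs2]
    have : (0:ℝ) < e ^ 2 := by positivity
    field_simp
    ring
  rw [hms] at hm1
  rw [hmt] at hm2
  -- linear combinations
  have k1 : (2*s - 1)*(r₂ + 1) + s*(1 - s) = 0 := by
    linear_combination h1 + hm1 - 2 * h0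
  have k2 : (2*t - 1)*(r₂ + 1) + 2*t*(1 - t) = 0 := by
    linear_combination (h2 + hm2 - 2 * h0) / 2
  have k3 : s*(1 - s)*(2*t - 1) = 2*t*(1 - t)*(2*s - 1) := by
    linear_combination (2*t - 1) * k1 - (2*s - 1) * k2
  -- substitute explicit values and derive a contradiction
  rw [hs1, hs2] at k3
  have h1p : (0:ℝ) < e + 1 := by linarith
  have h2p : (0:ℝ) < e ^ 2 + 1 := by positivity
  field_simp at k3
  have key : e * (e - 1)^3 * (e + 1)^2 * (e^2 + 1) = 0 := by linear_combination (e * (e + 1) * (e^2 + 1)) * k3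
  have hpos : 0 < e * (e - 1)^3 * (e + 1)^2 * (e^2 + 1) := by
    have h3 : (0:ℝ) < (e - 1)^3 := pow_pos (by linarith) 3
    have h4 : (0:ℝ) < (e + 1)^2 := by positivity
    exact mul_pos (mul_pos (mul_pos hep h3) h4) h2p
  linarith
end

section
/- Let Φ(x) denote the cumulative distribution function of the standard Gaussian distribution N(0,1), and let GeLU(x) = x·Φ(x). Then for all real numbers r_1, r_2, the function x ↦ (r_1 + GeLU(x))·(r_2 + GeLU'(x)), where GeLU'(x) = Φ(x) + x·(2π)^{−1/2} e^{−x²/2} is the derivative of GeLU, is not constant Lebesgue-almost everywhere on ℝ. -/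
open MeasureTheory

/-- The cumulative distribution function of the standard Gaussian distribution,
`Φ x = ∫_{-∞}^x (2π)^{-1/2} exp (-t²/2) dt`. -/
noncomputable def stdGaussCDF (x : ℝ) : ℝ :=
  ∫ t in Set.Iic x, (Real.sqrt (2 * Real.pi))⁻¹ * Real.exp (-t ^ 2 / 2)

/-- The GeLU function `GeLU x = x * Φ x`. -/
noncomputable def gelu (x : ℝ) : ℝ := x * stdGaussCDF x

/-- The derivative of GeLU: `GeLU' x = Φ x + x * (2π)^{-1/2} exp (-x²/2)`. -/
noncomputable def gelu' (x : ℝ) : ℝ :=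
  stdGaussCDF x + x * ((Real.sqrt (2 * Real.pi))⁻¹ * Real.exp (-x ^ 2 / 2))

noncomputable def phi (t : ℝ) : ℝ := (Real.sqrt (2 * Real.pi))⁻¹ * Real.exp (-t ^ 2 / 2)

lemma phi_pos (t : ℝ) : 0 < phi t := by
  unfold phi
  have h1 : (0:ℝ) < Real.sqrt (2 * Real.pi) := Real.sqrt_pos.mpr (by positivity)
  positivity

lemma phi_integrable : Integrable phi := by
  have h : phi = fun t : ℝ => (Real.sqrt (2 * Real.pi))⁻¹ * Real.exp (-(1/2 : ℝ) * t ^ 2) := by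
    funext t; unfold phi; ring_nf
  rw [h]
  exact (integrable_exp_neg_mul_sq (by norm_num : (0:ℝ) < 1/2)).const_mul _

lemma phi_cont : Continuous phi := by unfold phi; fun_prop

lemma stdGaussCDF_hasDeriv (x : ℝ) : HasDerivAt stdGaussCDF (phi x) x := by
  have key : ∀ y : ℝ, stdGaussCDF y = (∫ t in Set.Iic (0:ℝ), phi t) + ∫ t in (0:ℝ)..y, phi t := by
    intro y
    rw [← intervalIntegral.integral_Iic_sub_Iic phi_integrable.integrableOn
      phi_integrable.integrableOn]
    unfold stdGaussCDF phi
    ring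
  have hd : HasDerivAt (fun y => ∫ t in (0:ℝ)..y, phi t) (phi x) x :=
    (intervalIntegral.integral_hasStrictDerivAt_right
      (phi_cont.intervalIntegrable _ _) (phi_cont.stronglyMeasurableAtFilter _ _)
      phi_cont.continuousAt).hasDerivAt
  exact (hd.const_add _).congr_of_eventuallyEq (Filter.Eventually.of_forall key)

lemma phi_hasDeriv (x : ℝ) : HasDerivAt phi (-x * phi x) x := by
  have h1 : HasDerivAt (fun t : ℝ => -t ^ 2 / 2) (-x) x := by
    have := ((hasDerivAt_pow 2 x).neg).div_const 2
    exact this.congr_deriv (by push_cast; ring)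
  have h2 := (h1.exp).const_mul (Real.sqrt (2 * Real.pi))⁻¹
  unfold phi
  exact h2.congr_deriv (by ring)

lemma gelu_hasDeriv (x : ℝ) : HasDerivAt gelu (gelu' x) x := by
  have h := (hasDerivAt_id x).mul (stdGaussCDF_hasDeriv x)
  unfold gelu gelu'
  exact h.congr_deriv (by unfold phi; simp only [id_eq]; ring)

lemma gelu'_hasDeriv (x : ℝ) : HasDerivAt gelu' ((2 - x ^ 2) * phi x) x := by
  have h := (stdGaussCDF_hasDeriv x).add ((hasDerivAt_id x).mul (phi_hasDeriv x))
  have he : gelu' = fun y => stdGaussCDF y + y * phi y := rfl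
  rw [he]
  exact h.congr_deriv (by unfold phi; simp only [id_eq]; ring)

/-- For all reals `r₁ r₂`, the function
`x ↦ (r₁ + GeLU x) * (r₂ + GeLU' x)` is not constant Lebesgue-almost everywhere. -/
theorem stmt_11 (r₁ r₂ : ℝ) :
    ¬ ∃ C : ℝ, ∀ᵐ x : ℝ ∂(volume : Measure ℝ),
      (r₁ + gelu x) * (r₂ + gelu' x) = C := by
  rintro ⟨C, hC⟩
  set f : ℝ → ℝ := fun x => (r₁ + gelu x) * (r₂ + gelu' x) with hf
  have hfd : ∀ x, HasDerivAt f
      (gelu' x * (r₂ + gelu' x) + (r₁ + gelu x) * ((2 - x ^ 2) * phi x)) x := by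
    intro x
    have h := ((gelu_hasDeriv x).const_add r₁).mul ((gelu'_hasDeriv x).const_add r₂)
    exact h.congr_deriv (by ring)
  have hfc : Continuous f :=
    Differentiable.continuous fun x => (hfd x).differentiableAt
  have hfe : f = fun _ => C := (hfc.ae_eq_iff_eq volume continuous_const).mp hC
  have hD : ∀ x : ℝ, gelu' x * (r₂ + gelu' x) + (r₁ + gelu x) * ((2 - x ^ 2) * phi x) = 0 := by
    intro x
    have h1 := hfd x
    rw [hfe] at h1
    exact h1.unique (hasDerivAt_const x C)
  set a : ℝ := Real.sqrt 2 with ha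
  have ha2 : a ^ 2 = 2 := Real.sq_sqrt (by norm_num)
  have hapos : 0 < a := Real.sqrt_pos.mpr (by norm_num)
  have hPa := hD a
  have hPb := hD (-a)
  rw [show (2 : ℝ) - a ^ 2 = 0 by rw [ha2]; ring] at hPa
  rw [show (2 : ℝ) - (-a) ^ 2 = 0 by rw [neg_pow]; simp [ha2]] at hPb
  simp only [zero_mul, mul_zero, add_zero] at hPa hPb
  have hΦnonneg : ∀ x : ℝ, 0 ≤ stdGaussCDF x := fun x =>
    setIntegral_nonneg measurableSet_Iic fun t _ => (phi_pos t).le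
  have hgelu'_eq : ∀ x : ℝ, gelu' x = stdGaussCDF x + x * phi x := fun _ => rfl
  have hpos : 0 < gelu' a := by
    rw [hgelu'_eq]
    have : 0 < a * phi a := mul_pos hapos (phi_pos a)
    linarith [hΦnonneg a]
  -- upper bound on Φ(-a)
  have hmoment : Integrable (fun t : ℝ => -t * phi t) := by
    have h : (fun t : ℝ => -t * phi t)
        = fun t : ℝ => (-(Real.sqrt (2 * Real.pi))⁻¹) * (t * Real.exp (-(1/2:ℝ) * t ^ 2)) := by
      funext t; unfold phi; ring_nf
    rw [h]
    exact ((integrable_mul_exp_neg_mul_sq (by norm_num : (0:ℝ) < 1/2)).const_mul _)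
  have hphi_tendsto : Filter.Tendsto phi Filter.atBot (nhds 0) := by
    have h2 : Filter.Tendsto (fun k : ℝ => k ^ 2) Filter.atBot Filter.atTop := by
      have h := Filter.Tendsto.atBot_mul_atBot₀
        (Filter.tendsto_id : Filter.Tendsto id (Filter.atBot : Filter ℝ) Filter.atBot)
        (Filter.tendsto_id : Filter.Tendsto id (Filter.atBot : Filter ℝ) Filter.atBot)
      refine h.congr fun k => ?_
      simp [sq]
    have h3 : Filter.Tendsto (fun k : ℝ => -k ^ 2 / 2) Filter.atBot Filter.atBot :=
      Filter.Tendsto.atBot_div_const (by norm_num : (0:ℝ) < 2)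
        (Filter.tendsto_neg_atBot_iff.mpr h2)
    have h4 := Real.tendsto_exp_atBot.comp h3
    have h5 := h4.const_mul (Real.sqrt (2 * Real.pi))⁻¹
    have h6 : (fun k : ℝ => (Real.sqrt (2 * Real.pi))⁻¹ * Real.exp (-k ^ 2 / 2)) = phi := rfl
    rw [← h6]
    simpa only [Function.comp_def, mul_zero] using h5
  have hint : ∫ t in Set.Iic (-a), (-t) * phi t = phi (-a) := by
    have h := integral_Iic_of_hasDerivAt_of_tendsto' (a := -a) (f := phi)
      (f' := fun t => -t * phi t) (m := 0)
      (fun x _ => phi_hasDeriv x) hmoment.integrableOn hphi_tendsto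
    rw [h]; ring
  have hΦle : stdGaussCDF (-a) ≤ a⁻¹ * phi (-a) := by
    have hmono : stdGaussCDF (-a) ≤ ∫ t in Set.Iic (-a), a⁻¹ * (-t * phi t) := by
      have heq : stdGaussCDF (-a) = ∫ t in Set.Iic (-a), phi t := rfl
      rw [heq]
      refine setIntegral_mono_on phi_integrable.integrableOn
        ((hmoment.const_mul a⁻¹).integrableOn) measurableSet_Iic ?_
      intro t ht
      have ht' : t ≤ -a := ht
      have h1 : a ≤ -t := by linarith
      have h2 : (1:ℝ) ≤ a⁻¹ * (-t) := by
        rw [inv_mul_eq_div, le_div_iff₀ hapos]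
        linarith
      have := phi_pos t
      nlinarith
    calc stdGaussCDF (-a) ≤ ∫ t in Set.Iic (-a), a⁻¹ * (-t * phi t) := hmono
      _ = a⁻¹ * ∫ t in Set.Iic (-a), -t * phi t := by rw [integral_const_mul]
      _ = a⁻¹ * phi (-a) := by rw [hint]
  have hneg : gelu' (-a) < 0 := by
    rw [hgelu'_eq]
    have hp := phi_pos (-a)
    have hainv : a⁻¹ < a := by
      rw [inv_lt_iff_one_lt_mul₀ hapos]  -- may need fixing
      nlinarith
    nlinarith [hΦle]
  -- conclude
  have hr2a : r₂ = -gelu' a := by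
    rcases mul_eq_zero.mp hPa with h | h
    · exact absurd h (ne_of_gt hpos)
    · linarith
  have hr2b : r₂ = -gelu' (-a) := by
    rcases mul_eq_zero.mp hPb with h | h
    · exact absurd h (ne_of_lt hneg)
    · linarith
  rw [hr2a] at hr2b
  have : gelu' a = gelu' (-a) := by linarith
  linarith [hpos, hneg, this]
end
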